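/- Let G be a benzenoid system with a perfect matching, let Q be an induced convex subgraph of R(G) isomorphic to Q_{k,l} with vertices identified with tuples as in the standard representation. Let M be the all-zero vertex; for j ∈ {1,…,k+l} let N^j be the vertex with 1 in position j and 0 elsewhere and h_j the hexagon with M ⊕ N^j = E(h_j); for i ∈ {k+1,…,k+l} let O^i be the vertex with 2 in position i and 0 elsewhere and h_i' the hexagon with N^i ⊕ O^i = E(h_i'). Then for every i ∈ {k+1,…,k+l} and every j ∈ {1,…,k+l} with j ≠ i, the hexagons h_i' and h_j are vertex-disjoint. -/

import Mathlib

open scoped symmDiff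

namespace GZZ

/-! ### Cells (hexagonal faces) of the hexagonal lattice in "brick wall" coordinates.

A vertex of the hexagonal lattice is a pair `(x, y) : ℤ × ℤ`; horizontal edges join
`(x, y)` and `(x + 1, y)`, and vertical edges join `(x, y)` and `(x, y + 1)` for `x + y` even.
The hexagonal faces of the lattice are indexed by their lower-left vertex `c`
(with `c.1 + c.2` even). -/

abbrev V2 := ℤ × ℤ

/-- The six vertices of the hexagonal face with lower-left corner `c`. -/
def cellVerts (c : V2) : Set V2 :=
  {(c.1, c.2), (c.1 + 1, c.2), (c.1 + 2, c.2),
   (c.1, c.2 + 1), (c.1 + 1, c.2 + 1), (c.1 + 2, c.2 + 1)}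

/-- The six edges of the hexagonal face with lower-left corner `c`. -/
def cellEdges (c : V2) : Set (Sym2 V2) :=
  {s((c.1, c.2), (c.1 + 1, c.2)), s((c.1 + 1, c.2), (c.1 + 2, c.2)),
   s((c.1, c.2 + 1), (c.1 + 1, c.2 + 1)), s((c.1 + 1, c.2 + 1), (c.1 + 2, c.2 + 1)),
   s((c.1, c.2), (c.1, c.2 + 1)), s((c.1 + 2, c.2), (c.1 + 2, c.2 + 1))}

/-- Two hexagonal faces are adjacent when they share an edge. -/
def cellAdj (c d : V2) : Prop :=
  (d.1 - c.1, d.2 - c.2) ∈ ({(2, 0), (-2, 0), (1, 1), (1, -1), (-1, 1), (-1, -1)} : Set V2)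

/-- A set of hexagonal faces is connected (via sharing edges). -/
def CellConnected (S : Set V2) : Prop :=
  ∀ c ∈ S, ∀ d ∈ S, Relation.ReflTransGen (fun a b => a ∈ S ∧ b ∈ S ∧ cellAdj a b) c d

/-- A benzenoid system, given by its (finite, nonempty) set `B` of hexagonal faces:
the faces form a connected set and the complement has no holes (it is connected),
which is exactly the condition that `B` consists of all hexagons lying in the region
bounded by a cycle of the hexagonal lattice. -/
def IsBenzenoid (B : Set V2) : Prop :=
  B.Finite ∧ B.Nonempty ∧ (∀ c ∈ B, Even (c.1 + c.2)) ∧ CellConnected B ∧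
    CellConnected {c : V2 | Even (c.1 + c.2) ∧ c ∉ B}

section Generic

/-! ### Perfect matchings, resonance graphs and generalized Clar covers,
generically in a system of hexagonal cells `B` with vertex sets `cv` and edge sets `ce`. -/

variable {V C : Type*} (cv : C → Set V) (ce : C → Set (Sym2 V)) (B : Set C)

/-- The vertices of the system with cell set `B`. -/
def sysVerts : Set V := ⋃ c ∈ B, cv c

/-- The edges of the system with cell set `B`. -/
def sysEdges : Set (Sym2 V) := ⋃ c ∈ B, ce c

/-- A perfect matching: a set of pairwise non-incident edges of the system
covering all vertices of the system. -/
def IsPM (M : Set (Sym2 V)) : Prop :=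
  M ⊆ sysEdges ce B ∧
    (∀ e ∈ M, ∀ f ∈ M, e ≠ f → ∀ v : V, v ∈ e → v ∉ f) ∧
    (∀ v ∈ sysVerts cv B, ∃ e ∈ M, v ∈ e)

/-- The type of perfect matchings of the system. -/
abbrev PM := {M : Set (Sym2 V) // IsPM cv ce B M}

/-- The resonance graph: vertices are the perfect matchings, two perfect matchings
being adjacent whenever their symmetric difference is the edge set of a hexagon. -/
def resGraph : SimpleGraph (PM cv ce B) where
  Adj M N := M ≠ N ∧ ∃ c ∈ B, (M.val ∆ N.val) = ce c
  symm := by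
    constructor
    rintro M N ⟨hne, c, hc, hd⟩
    exact ⟨hne.symm, c, hc, by rwa [symmDiff_comm]⟩
  loopless := ⟨fun M h => h.1 rfl⟩

/-- The connected component (vertex set) of `v` in the spanning subgraph with edge set `E'`. -/
def compSet (E' : Set (Sym2 V)) (v : V) : Set V :=
  {w | (SimpleGraph.fromEdgeSet E').Reachable v w}

/-- The component of `v` in the spanning subgraph with edge set `E'` is a single edge `K₂`. -/
def IsK2Comp (E' : Set (Sym2 V)) (v : V) : Prop :=
  ∃ u w : V, u ≠ w ∧ s(u, w) ∈ E' ∧ compSet E' v = {u, w}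

/-- The component of `v` in the spanning subgraph with edge set `E'` is a cycle `Cₙ`. -/
def IsCycComp (n : ℕ) [NeZero n] (E' : Set (Sym2 V)) (v : V) : Prop :=
  ∃ c : ZMod n → V, Function.Injective c ∧ compSet E' v = Set.range c ∧
    (∀ i : ZMod n, s(c i, c (i + 1)) ∈ E') ∧
    (∀ e ∈ E', (∀ u, u ∈ e → u ∈ Set.range c) → ∃ i : ZMod n, e = s(c i, c (i + 1)))

/-- The number of `Cₙ`-components of the spanning subgraph with edge set `E'`. -/
noncomputable def numCyc (n : ℕ) [NeZero n] (Vs : Set V) (E' : Set (Sym2 V)) : ℕ :=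
  Set.ncard {S : Set V | ∃ v ∈ Vs, IsCycComp n E' v ∧ S = compSet E' v}

/-- A generalized Clar cover: a spanning subgraph (given by its edge set `E'`) of the
system each of whose connected components is a `C₆`, a `C₁₀` or a `K₂`. -/
def IsGenClarCover (E' : Set (Sym2 V)) : Prop :=
  E' ⊆ sysEdges ce B ∧
    ∀ v ∈ sysVerts cv B, IsK2Comp E' v ∨ IsCycComp 6 E' v ∨ IsCycComp 10 E' v

/-- `gz B k l`: the number of generalized Clar covers with exactly `k` components `C₆`
and `l` components `C₁₀`. -/
noncomputable def gz (k l : ℕ) : ℕ :=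
  Set.ncard {E' : Set (Sym2 V) | IsGenClarCover cv ce B E' ∧
    numCyc 6 (sysVerts cv B) E' = k ∧ numCyc 10 (sysVerts cv B) E' = l}

/-- The set of vertices of the resonance graph assigned by the map `f_{k,l}` to a
generalized Clar cover `E'`: all perfect matchings `M` such that `|M ∩ E(c)| = 3` for every
`C₆`-component (a hexagon) `c` of `E'`, `|M ∩ (E(h₁) ∪ E(h₂))| = 5` for every
`C₁₀`-component of `E'` formed by two hexagons `h₁, h₂`, and every `K₂`-component edge
of `E'` belongs to `M`. -/
def fSet (E' : Set (Sym2 V)) : Set (PM cv ce B) :=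
  {M | (∀ v ∈ sysVerts cv B, IsCycComp 6 E' v → ∀ h ∈ B, compSet E' v = cv h →
          Set.ncard (M.val ∩ ce h) = 3) ∧
       (∀ v ∈ sysVerts cv B, IsCycComp 10 E' v → ∀ h₁ ∈ B, ∀ h₂ ∈ B, h₁ ≠ h₂ →
          compSet E' v = cv h₁ ∪ cv h₂ →
          Set.ncard (M.val ∩ (ce h₁ ∪ ce h₂)) = 5) ∧
       (∀ u w : V, s(u, w) ∈ E' → compSet E' u = {u, w} → s(u, w) ∈ M.val)}

end Generic

/-! ### The graphs `Q_{k,l}` and the generalized cube polynomial. -/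

/-- The Cartesian (box) product of `n` copies of a graph `G`. -/
def boxPow {α : Type*} (G : SimpleGraph α) : (n : ℕ) → SimpleGraph (Fin n → α)
  | 0 => ⊥
  | n + 1 =>
    SimpleGraph.comap (fun f => (fun i => f i.castSucc, f (Fin.last n)))
      ((boxPow G n).boxProd G)

/-- The graph `Q_{k,l} = P₂^k □ P₃^l`. -/
def QGraph (k l : ℕ) : SimpleGraph ((Fin k → Fin 2) × (Fin l → Fin 3)) :=
  (boxPow (SimpleGraph.pathGraph 2) k).boxProd (boxPow (SimpleGraph.pathGraph 3) l)

/-- A set of vertices is convex if every shortest path between two of its vertices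
stays inside it. -/
def IsConvex {W : Type*} (G : SimpleGraph W) (S : Set W) : Prop :=
  ∀ u v : W, u ∈ S → v ∈ S → ∀ p : G.Walk u v, p.IsPath → p.length = G.dist u v →
    ∀ w ∈ p.support, w ∈ S

/-- `alphaQ G k l`: the number of induced convex subgraphs of `G` isomorphic to `Q_{k,l}`. -/
noncomputable def alphaQ {W : Type*} (G : SimpleGraph W) (k l : ℕ) : ℕ :=
  Set.ncard {S : Set W | IsConvex G S ∧ Nonempty (G.induce S ≃g QGraph k l)}

end GZZ
namespace GZZ

/-- The "tuple" description of `Q_{k,l}`: vertices are tuples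
`(b₁, …, b_k, b_{k+1}, …, b_{k+l})` with `bᵢ ∈ {0,1}` for `i ≤ k` and `bᵢ ∈ {0,1,2}` for
`i > k`, two tuples being adjacent iff they differ by exactly `1` in exactly one
coordinate. -/
def tupleGraph (k l : ℕ) : SimpleGraph ((Fin k → Fin 2) × (Fin l → Fin 3)) where
  Adj p q :=
    (∃ i : Fin k, ((p.1 i : ℕ) = (q.1 i : ℕ) + 1 ∨ (q.1 i : ℕ) = (p.1 i : ℕ) + 1) ∧
      (∀ j : Fin k, j ≠ i → p.1 j = q.1 j) ∧ p.2 = q.2) ∨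
    (∃ i : Fin l, ((p.2 i : ℕ) = (q.2 i : ℕ) + 1 ∨ (q.2 i : ℕ) = (p.2 i : ℕ) + 1) ∧
      (∀ j : Fin l, j ≠ i → p.2 j = q.2 j) ∧ p.1 = q.1)
  symm := by
    constructor
    rintro p q (⟨i, hd, hj, h2⟩ | ⟨i, hd, hj, h2⟩)
    · exact Or.inl ⟨i, hd.symm, fun j hji => (hj j hji).symm, h2.symm⟩
    · exact Or.inr ⟨i, hd.symm, fun j hji => (hj j hji).symm, h2.symm⟩
  loopless := by
    constructor
    rintro p (⟨i, hd, -, -⟩ | ⟨i, hd, -, -⟩) <;> omega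

end GZZ
namespace GZZ

/-- Sum of the two endpoints of an edge. -/
def esum (e : Sym2 V2) : V2 :=
  Sym2.lift ⟨fun a b => (a.1 + b.1, a.2 + b.2), fun a b => by simp [add_comm]⟩ e

lemma esum_spec {e : Sym2 V2} {c : V2} (h : e ∈ cellEdges c) :
    (((esum e).1 = 2*c.1+1 ∨ (esum e).1 = 2*c.1+3) ∧
      ((esum e).2 = 2*c.2 ∨ (esum e).2 = 2*c.2+2)) ∨
    (((esum e).1 = 2*c.1 ∨ (esum e).1 = 2*c.1+4) ∧ (esum e).2 = 2*c.2+1) := by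
  simp only [cellEdges, Set.mem_insert_iff, Set.mem_singleton_iff] at h
  rcases h with rfl|rfl|rfl|rfl|rfl|rfl <;> simp [esum] <;> omega

lemma esum_inj {e₁ e₂ : Sym2 V2} {c d : V2} (h1 : e₁ ∈ cellEdges c) (h2 : e₂ ∈ cellEdges d)
    (hs : esum e₁ = esum e₂) : e₁ = e₂ := by
  simp only [cellEdges, Set.mem_insert_iff, Set.mem_singleton_iff] at h1 h2
  rcases h1 with rfl|rfl|rfl|rfl|rfl|rfl <;> rcases h2 with rfl|rfl|rfl|rfl|rfl|rfl <;>
    simp only [esum, Sym2.lift_mk, Prod.mk.injEq] at hs <;>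
    simp only [Sym2.eq_iff, Prod.mk.injEq] <;> omega

lemma shared_eq {c d : V2} (hc : Even (c.1 + c.2)) (hd : Even (d.1 + d.2)) (hcd : c ≠ d)
    {e₁ e₂ : Sym2 V2} (h1c : e₁ ∈ cellEdges c) (h1d : e₁ ∈ cellEdges d)
    (h2c : e₂ ∈ cellEdges c) (h2d : e₂ ∈ cellEdges d) : e₁ = e₂ := by
  obtain ⟨m, hm⟩ := hc
  obtain ⟨n, hn⟩ := hd
  simp only [ne_eq, Prod.ext_iff, not_and] at hcd
  refine esum_inj h1c h2d ?_
  have s1c := esum_spec h1c; have s1d := esum_spec h1d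
  have s2c := esum_spec h2c; have s2d := esum_spec h2d
  rw [Prod.ext_iff]
  omega

lemma cellEdges_inj {c d : V2} (h : cellEdges c = cellEdges d) : c = d := by
  have h1 : s(((c.1:ℤ), c.2), (c.1+1, c.2)) ∈ cellEdges d := by rw [← h]; simp [cellEdges]
  have h2 : s(((c.1:ℤ), c.2), (c.1, c.2+1)) ∈ cellEdges d := by rw [← h]; simp [cellEdges]
  have s1 := esum_spec h1
  have s2 := esum_spec h2
  simp only [esum, Sym2.lift_mk] at s1 s2
  rw [Prod.ext_iff]
  omega


lemma four_three {α : Type*} {S1 S2 S3 : Set α}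
    (h1 : ∀ x ∈ S1, ∀ y ∈ S1, x = y) (h2 : ∀ x ∈ S2, ∀ y ∈ S2, x = y)
    (h3 : ∀ x ∈ S3, ∀ y ∈ S3, x = y) {e1 e2 e3 e4 : α}
    (m1 : e1 ∈ S1 ∨ e1 ∈ S2 ∨ e1 ∈ S3) (m2 : e2 ∈ S1 ∨ e2 ∈ S2 ∨ e2 ∈ S3)
    (m3 : e3 ∈ S1 ∨ e3 ∈ S2 ∨ e3 ∈ S3) (m4 : e4 ∈ S1 ∨ e4 ∈ S2 ∨ e4 ∈ S3)
    (d12 : e1 ≠ e2) (d13 : e1 ≠ e3) (d14 : e1 ≠ e4)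
    (d23 : e2 ≠ e3) (d24 : e2 ≠ e4) (d34 : e3 ≠ e4) : False := by
  rcases m1 with a1|a1|a1 <;> rcases m2 with a2|a2|a2 <;> rcases m3 with a3|a3|a3 <;>
    rcases m4 with a4|a4|a4 <;>
    first
      | exact d12 (h1 _ a1 _ a2) | exact d12 (h2 _ a1 _ a2) | exact d12 (h3 _ a1 _ a2)
      | exact d13 (h1 _ a1 _ a3) | exact d13 (h2 _ a1 _ a3) | exact d13 (h3 _ a1 _ a3)
      | exact d14 (h1 _ a1 _ a4) | exact d14 (h2 _ a1 _ a4) | exact d14 (h3 _ a1 _ a4)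
      | exact d23 (h1 _ a2 _ a3) | exact d23 (h2 _ a2 _ a3) | exact d23 (h3 _ a2 _ a3)
      | exact d24 (h1 _ a2 _ a4) | exact d24 (h2 _ a2 _ a4) | exact d24 (h3 _ a2 _ a4)
      | exact d34 (h1 _ a3 _ a4) | exact d34 (h2 _ a3 _ a4) | exact d34 (h3 _ a3 _ a4)

lemma square {a b c d : V2} (hpa : Even (a.1+a.2)) (hpb : Even (b.1+b.2))
    (hpc : Even (c.1+c.2)) (hpd : Even (d.1+d.2))
    (hac : a ≠ c) (hba : b ≠ a) (hdc : d ≠ c)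
    (heq : cellEdges a ∆ cellEdges b = cellEdges c ∆ cellEdges d) :
    d = a ∧ b = c := by
  have hda : d = a := by
    by_contra hda
    have tri : ∀ e, e ∈ cellEdges a →
        e ∈ cellEdges a ∩ cellEdges b ∨ e ∈ cellEdges a ∩ cellEdges c ∨
          e ∈ cellEdges a ∩ cellEdges d := by
      intro e hea
      by_cases heb : e ∈ cellEdges b
      · exact Or.inl ⟨hea, heb⟩
      · have hsd : e ∈ cellEdges a ∆ cellEdges b := Set.mem_symmDiff.mpr (Or.inl ⟨hea, heb⟩)
        rw [heq] at hsd
        rcases Set.mem_symmDiff.mp hsd with ⟨hc', -⟩ | ⟨hd', -⟩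
        · exact Or.inr (Or.inl ⟨hea, hc'⟩)
        · exact Or.inr (Or.inr ⟨hea, hd'⟩)
    have dd : ∀ x y z w : V2, esum s(x,y) ≠ esum s(z,w) → s(x,y) ≠ s(z,w) :=
      fun _ _ _ _ hne he => hne (congrArg esum he)
    refine four_three
      (fun x hx y hy => shared_eq hpa hpb hba.symm hx.1 hx.2 hy.1 hy.2)
      (fun x hx y hy => shared_eq hpa hpc hac hx.1 hx.2 hy.1 hy.2)
      (fun x hx y hy => shared_eq hpa hpd (fun hh => hda hh.symm) hx.1 hx.2 hy.1 hy.2)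
      (tri s(((a.1:ℤ), a.2), (a.1+1, a.2)) (by simp [cellEdges]))
      (tri s(((a.1:ℤ)+1, a.2), (a.1+2, a.2)) (by simp [cellEdges]))
      (tri s(((a.1:ℤ), a.2+1), (a.1+1, a.2+1)) (by simp [cellEdges]))
      (tri s(((a.1:ℤ)+1, a.2+1), (a.1+2, a.2+1)) (by simp [cellEdges]))
      ?_ ?_ ?_ ?_ ?_ ?_ <;>
    · apply dd
      simp only [esum, Sym2.lift_mk, ne_eq, Prod.mk.injEq, not_and]
      omega
  refine ⟨hda, cellEdges_inj ?_⟩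
  have h2 : cellEdges a ∆ cellEdges b = cellEdges a ∆ cellEdges c := by
    rw [heq, hda, symmDiff_comm]
  calc cellEdges b = cellEdges a ∆ (cellEdges a ∆ cellEdges b) :=
        (symmDiff_symmDiff_cancel_left _ _).symm
    _ = cellEdges a ∆ (cellEdges a ∆ cellEdges c) := by rw [h2]
    _ = cellEdges c := symmDiff_symmDiff_cancel_left _ _

lemma two_incident {c v : V2} (hv : v ∈ cellVerts c) :
    ∃ d₁ d₂ : Sym2 V2, d₁ ≠ d₂ ∧ d₁ ∈ cellEdges c ∧ d₂ ∈ cellEdges c ∧ v ∈ d₁ ∧ v ∈ d₂ := by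
  have dd : ∀ x y z w : V2, esum s(x,y) ≠ esum s(z,w) → s(x,y) ≠ s(z,w) :=
    fun _ _ _ _ hne he => hne (congrArg esum he)
  simp only [cellVerts, Set.mem_insert_iff, Set.mem_singleton_iff] at hv
  rcases hv with rfl|rfl|rfl|rfl|rfl|rfl
  · exact ⟨s((c.1, c.2), (c.1+1, c.2)), s((c.1, c.2), (c.1, c.2+1)),
      by apply dd; simp only [esum, Sym2.lift_mk, ne_eq, Prod.mk.injEq, not_and]; omega,
      by simp [cellEdges], by simp [cellEdges], by simp, by simp⟩
  · exact ⟨s((c.1, c.2), (c.1+1, c.2)), s((c.1+1, c.2), (c.1+2, c.2)),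
      by apply dd; simp only [esum, Sym2.lift_mk, ne_eq, Prod.mk.injEq, not_and]; omega,
      by simp [cellEdges], by simp [cellEdges], by simp, by simp⟩
  · exact ⟨s((c.1+1, c.2), (c.1+2, c.2)), s((c.1+2, c.2), (c.1+2, c.2+1)),
      by apply dd; simp only [esum, Sym2.lift_mk, ne_eq, Prod.mk.injEq, not_and]; omega,
      by simp [cellEdges], by simp [cellEdges], by simp, by simp⟩
  · exact ⟨s((c.1, c.2+1), (c.1+1, c.2+1)), s((c.1, c.2), (c.1, c.2+1)),
      by apply dd; simp only [esum, Sym2.lift_mk, ne_eq, Prod.mk.injEq, not_and]; omega,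
      by simp [cellEdges], by simp [cellEdges], by simp, by simp⟩
  · exact ⟨s((c.1, c.2+1), (c.1+1, c.2+1)), s((c.1+1, c.2+1), (c.1+2, c.2+1)),
      by apply dd; simp only [esum, Sym2.lift_mk, ne_eq, Prod.mk.injEq, not_and]; omega,
      by simp [cellEdges], by simp [cellEdges], by simp, by simp⟩
  · exact ⟨s((c.1+1, c.2+1), (c.1+2, c.2+1)), s((c.1+2, c.2), (c.1+2, c.2+1)),
      by apply dd; simp only [esum, Sym2.lift_mk, ne_eq, Prod.mk.injEq, not_and]; omega,
      by simp [cellEdges], by simp [cellEdges], by simp, by simp⟩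

lemma alt {M M' : Set (Sym2 V2)}
    (hM : ∀ e ∈ M, ∀ f ∈ M, e ≠ f → ∀ v : V2, v ∈ e → v ∉ f)
    (hM' : ∀ e ∈ M', ∀ f ∈ M', e ≠ f → ∀ v : V2, v ∈ e → v ∉ f)
    {c : V2} (hsd : M ∆ M' = cellEdges c) {v : V2} (hv : v ∈ cellVerts c) :
    ∃ e, e ∈ M ∧ e ∈ cellEdges c ∧ v ∈ e := by
  obtain ⟨d₁, d₂, hne, h1, h2, hv1, hv2⟩ := two_incident hv
  have h1' : d₁ ∈ M ∆ M' := by rw [hsd]; exact h1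
  have h2' : d₂ ∈ M ∆ M' := by rw [hsd]; exact h2
  rcases Set.mem_symmDiff.mp h1' with ⟨hm, -⟩ | ⟨hm', -⟩
  · exact ⟨d₁, hm, h1, hv1⟩
  · rcases Set.mem_symmDiff.mp h2' with ⟨hm2, -⟩ | ⟨hm2', -⟩
    · exact ⟨d₂, hm2, h2, hv2⟩
    · exact absurd hv2 (hM' d₁ hm' d₂ hm2' hne v hv1)



/-- **Claim 3.** With the notation of the previous claims (`hⱼ` the hexagon
with `M ⊕ Nʲ = E(hⱼ)` for `j ∈ {1, …, k+l}`, and `hᵢ'` the hexagon with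
`Nⁱ ⊕ Oⁱ = E(hᵢ')` for `i ∈ {k+1, …, k+l}`), for all `i ∈ {k+1, …, k+l}` and all
`j ∈ {1, …, k+l}` with `j ≠ i`, the hexagons `hᵢ'` and `hⱼ` are vertex-disjoint. -/
theorem hexagon_prime_disjoint (B : Set V2) (hB : IsBenzenoid B)
    (hex : ∃ M, IsPM cellVerts cellEdges B M) (k l : ℕ)
    (S : Set (PM cellVerts cellEdges B))
    (hconv : IsConvex (resGraph cellVerts cellEdges B) S)
    (φ : tupleGraph k l ≃g (resGraph cellVerts cellEdges B).induce S)
    (N : Fin k ⊕ Fin l → (Fin k → Fin 2) × (Fin l → Fin 3))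
    (hNk : ∀ i : Fin k, N (Sum.inl i) = (fun j => if j = i then 1 else 0, fun _ => 0))
    (hNl : ∀ i : Fin l, N (Sum.inr i) = (fun _ => 0, fun j => if j = i then 1 else 0))
    (h : Fin k ⊕ Fin l → V2) (hhB : ∀ i, h i ∈ B)
    (hhex : ∀ i, (φ (fun _ => 0, fun _ => 0)).val.val ∆ (φ (N i)).val.val = cellEdges (h i))
    (h' : Fin l → V2) (hh'B : ∀ i, h' i ∈ B)
    (hhex' : ∀ i : Fin l,
      (φ (N (Sum.inr i))).val.val ∆
        (φ (fun _ => 0, fun j => if j = i then 2 else 0)).val.val = cellEdges (h' i)) :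
    ∀ (i : Fin l) (j : Fin k ⊕ Fin l), j ≠ Sum.inr i →
      cellVerts (h' i) ∩ cellVerts (h j) = ∅ := by
  intro i j hji
  have hpar : ∀ c ∈ B, Even (c.1 + c.2) := hB.2.2.1
  set t0 : (Fin k → Fin 2) × (Fin l → Fin 3) := (fun _ => 0, fun _ => 0) with ht0
  set tO : (Fin k → Fin 2) × (Fin l → Fin 3) :=
    (fun _ => 0, fun j => if j = i then 2 else 0) with htO
  -- injectivity of matchings
  have inj : ∀ p q, (φ p).val.val = (φ q).val.val → p = q := by
    intro p q hpq
    exact φ.toEquiv.injective (Subtype.ext (Subtype.ext hpq))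
  have cancel : ∀ X Y Z : Set (Sym2 V2), X ∆ Y = X ∆ Z → Y = Z := by
    intro X Y Z hXYZ
    calc Y = X ∆ (X ∆ Y) := (symmDiff_symmDiff_cancel_left X Y).symm
      _ = X ∆ (X ∆ Z) := by rw [hXYZ]
      _ = Z := symmDiff_symmDiff_cancel_left X Z
  have adjhex : ∀ p q, (tupleGraph k l).Adj p q →
      ∃ c ∈ B, (φ p).val.val ∆ (φ q).val.val = cellEdges c := by
    intro p q hpq
    have h2 : (resGraph cellVerts cellEdges B).Adj (φ p).val (φ q).val :=
      φ.map_adj_iff.mpr hpq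
    exact (h2 : (φ p).val ≠ (φ q).val ∧
      ∃ c ∈ B, (φ p).val.val ∆ (φ q).val.val = cellEdges c).2
  -- the square completion
  have key : ∃ tX tZ : (Fin k → Fin 2) × (Fin l → Fin 3),
      (tupleGraph k l).Adj (N j) tX ∧ (tupleGraph k l).Adj (N (Sum.inr i)) tX ∧
      (tupleGraph k l).Adj tX tZ ∧ (tupleGraph k l).Adj tO tZ ∧
      tX ≠ t0 ∧ tX ≠ tO ∧ tZ ≠ N (Sum.inr i) ∧ N j ≠ N (Sum.inr i) := by
    rcases j with a | b
    · refine ⟨(fun x => if x = a then 1 else 0, fun x => if x = i then 1 else 0),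
             (fun x => if x = a then 1 else 0, fun x => if x = i then 2 else 0),
             ?_, ?_, ?_, ?_, ?_, ?_, ?_, ?_⟩
      · rw [hNk a]
        exact Or.inr ⟨i, Or.inr (by simp), fun j' hj' => by simp [hj'], rfl⟩
      · rw [hNl i]
        exact Or.inl ⟨a, Or.inr (by simp), fun j' hj' => by simp [hj'], rfl⟩
      · exact Or.inr ⟨i, Or.inr (by simp), fun j' hj' => by simp [hj'], rfl⟩
      · exact Or.inl ⟨a, Or.inr (by simp [htO]), fun j' hj' => by simp [hj', htO], rfl⟩
      · intro hh
        have := congrFun (congrArg Prod.snd hh) i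
        simp [ht0] at this
      · intro hh
        have := congrFun (congrArg Prod.snd hh) i
        simp [htO] at this
      · rw [hNl i]
        intro hh
        have := congrFun (congrArg Prod.snd hh) i
        simp at this
      · rw [hNk a, hNl i]
        intro hh
        have := congrFun (congrArg Prod.fst hh) a
        simp at this
    · have hbi : b ≠ i := fun hh => hji (by rw [hh])
      refine ⟨(fun _ => 0, fun x => if x = b then 1 else if x = i then 1 else 0),
             (fun _ => 0, fun x => if x = b then 1 else if x = i then 2 else 0),
             ?_, ?_, ?_, ?_, ?_, ?_, ?_, ?_⟩
      · rw [hNl b]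
        refine Or.inr ⟨i, Or.inr (by simp [Ne.symm hbi]), fun j' hj' => ?_, rfl⟩
        by_cases hb' : j' = b <;> simp [hb', hj']
      · rw [hNl i]
        refine Or.inr ⟨b, Or.inr (by simp [hbi]), fun j' hj' => ?_, rfl⟩
        by_cases hi' : j' = i <;> simp [hi', hj']
      · refine Or.inr ⟨i, Or.inr (by simp [Ne.symm hbi]), fun j' hj' => ?_, rfl⟩
        by_cases hb' : j' = b <;> simp [hb', hj']
      · refine Or.inr ⟨b, Or.inr (by simp [hbi, htO]), fun j' hj' => ?_, rfl⟩
        by_cases hi' : j' = i <;> simp [hi', hj', Ne.symm hbi, htO]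
      · intro hh
        have := congrFun (congrArg Prod.snd hh) i
        simp [ht0, Ne.symm hbi] at this
      · intro hh
        have := congrFun (congrArg Prod.snd hh) i
        simp [htO, Ne.symm hbi] at this
      · rw [hNl i]
        intro hh
        have := congrFun (congrArg Prod.snd hh) i
        simp [Ne.symm hbi] at this
      · rw [hNl b, hNl i]
        intro hh
        have := congrFun (congrArg Prod.snd hh) b
        simp [hbi] at this
    
  obtain ⟨tX, tZ, aNX, aIX, aXZ, aOZ, hXne0, hXneO, hZneI, hNne⟩ := key
  have h0N := hhex j
  have h0I := hhex (Sum.inr i)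
  have hIO := hhex' i
  obtain ⟨c2, hc2B, hc2⟩ := adjhex _ _ aNX
  obtain ⟨c1, hc1B, hc1⟩ := adjhex _ _ aIX
  obtain ⟨c3, hc3B, hc3⟩ := adjhex _ _ aXZ
  obtain ⟨c4, hc4B, hc4⟩ := adjhex _ _ aOZ
  have hne_ji : h j ≠ h (Sum.inr i) := by
    intro hE
    exact hNne (inj _ _ (cancel ((φ t0).val.val) _ _ (by rw [h0N, h0I, hE])))
  have hc2ne : c2 ≠ h j := by
    intro hE
    exact hXne0 (inj _ _ (cancel ((φ (N j)).val.val) _ _ (by rw [hc2, hE, ← h0N, symmDiff_comm])))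
  have hc1ne : c1 ≠ h (Sum.inr i) := by
    intro hE
    exact hXne0 (inj _ _
      (cancel ((φ (N (Sum.inr i))).val.val) _ _ (by rw [hc1, hE, ← h0I, symmDiff_comm])))
  have eqA : cellEdges (h j) ∆ cellEdges c2 = cellEdges (h (Sum.inr i)) ∆ cellEdges c1 := by
    rw [← h0N, ← hc2, ← h0I, ← hc1, symmDiff_assoc, symmDiff_symmDiff_cancel_left,
      symmDiff_assoc, symmDiff_symmDiff_cancel_left]
  obtain ⟨hc1hj, hc2hi⟩ := square (hpar _ (hhB j)) (hpar _ hc2B)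
    (hpar _ (hhB (Sum.inr i))) (hpar _ hc1B) hne_ji hc2ne hc1ne eqA
  have hIX : (φ (N (Sum.inr i))).val.val ∆ (φ tX).val.val = cellEdges (h j) := by
    rw [hc1, hc1hj]
  have hne' : h' i ≠ h j := by
    intro hE
    exact hXneO (inj _ _
      (cancel ((φ (N (Sum.inr i))).val.val) _ _ (by rw [hIX, hIO, hE])))
  have hc4ne : c4 ≠ h' i := by
    intro hE
    exact hZneI (inj _ _ (cancel ((φ tO).val.val) _ _ (by rw [hc4, hE, ← hIO, symmDiff_comm])))
  have hc3ne : c3 ≠ h j := by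
    intro hE
    exact hZneI (inj _ _ (cancel ((φ tX).val.val) _ _ (by rw [hc3, hE, ← hIX, symmDiff_comm])))
  have eqB : cellEdges (h' i) ∆ cellEdges c4 = cellEdges (h j) ∆ cellEdges c3 := by
    rw [← hIO, ← hc4, ← hIX, ← hc3, symmDiff_assoc, symmDiff_symmDiff_cancel_left,
      symmDiff_assoc, symmDiff_symmDiff_cancel_left]
  obtain ⟨hc3', hc4'⟩ := square (hpar _ (hh'B i)) (hpar _ hc4B) (hpar _ (hhB j))
    (hpar _ hc3B) hne' hc4ne hc3ne eqB
  have hOZ : (φ tO).val.val ∆ (φ tZ).val.val = cellEdges (h j) := by rw [hc4, hc4']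
  -- final disjointness
  rw [Set.eq_empty_iff_forall_notMem]
  rintro v ⟨hv1, hv2⟩
  have pmI := ((φ (N (Sum.inr i))).val.2).2.1
  have pmO := ((φ tO).val.2).2.1
  have pmX := ((φ tX).val.2).2.1
  have pmZ := ((φ tZ).val.2).2.1
  obtain ⟨e, heMI, heE', hve⟩ := alt pmI pmO hIO hv1
  obtain ⟨f, hfMI, hfE, hvf⟩ := alt pmI pmX hIX hv2
  have hef : e = f := by
    by_contra hne
    exact pmI e heMI f hfMI hne v hve hvf
  have heOnot : e ∉ (φ tO).val.val := by
    have hm : e ∈ (φ (N (Sum.inr i))).val.val ∆ (φ tO).val.val := by rw [hIO]; exact heE'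
    rcases Set.mem_symmDiff.mp hm with ⟨-, hno⟩ | ⟨-, hni⟩
    · exact hno
    · exact absurd heMI hni
  have hIO' : (φ tO).val.val ∆ (φ (N (Sum.inr i))).val.val = cellEdges (h' i) := by
    rw [symmDiff_comm]; exact hIO
  obtain ⟨e', he'MO, he'E', hve'⟩ := alt pmO pmI hIO' hv1
  obtain ⟨g, hgMO, hgE, hvg⟩ := alt pmO pmZ hOZ hv2
  have heg : e' = g := by
    by_contra hne
    exact pmO e' he'MO g hgMO hne v hve' hvg
  have hgE' : g ∈ cellEdges (h' i) := by rw [← heg]; exact he'E'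
  have hfE' : e ∈ cellEdges (h j) := by rw [hef]; exact hfE
  have : e = g := shared_eq (hpar _ (hh'B i)) (hpar _ (hhB j)) hne' heE' hfE' hgE' hgE
  rw [this] at heOnot
  exact heOnot hgMO
end GZZ
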